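/- For a biframe L, the lattice 𝒮(L) of subbilocales is isomorphic to the sub-meet-semilattice of the coframe 𝒮(L₀) of sublocales of the ambient frame generated by 𝒮(e_{L₁})[𝒮(L₁)] ∪ 𝒮(e_{L₂})[𝒮(L₂)], where 𝒮(e_{Lᵢ}) : 𝒮(Lᵢ) → 𝒮(L₀) is the image map of sublocales along the subframe inclusion e_{Lᵢ} : Lᵢ → L₀ (sending a sublocale quotient fᵢ of Lᵢ to the pushout of fᵢ along e_{Lᵢ}). -/

import Mathlib

/-! Basic category-style notions for frames and biframes. -/

/-- `(K, i1, i2)` is a coproduct of the frames `L1` and `L2` in the category of frames. -/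
def IsCoprod {L1 L2 K : Type} [Order.Frame L1] [Order.Frame L2] [Order.Frame K]
    (i1 : FrameHom L1 K) (i2 : FrameHom L2 K) : Prop :=
  ∀ (Q : Type) [Order.Frame Q], ∀ (h1 : FrameHom L1 Q) (h2 : FrameHom L2 Q),
    ∃! k : FrameHom K Q, k.comp i1 = h1 ∧ k.comp i2 = h2

/-- `f' : C → P` (the pushout of `f` along `g`) and `g' : B → P` form a pushout square over
`f : A → B` and `g : A → C` in the category of frames. -/
def IsPushoutSquare {A B C P : Type} [Order.Frame A] [Order.Frame B] [Order.Frame C]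
    [Order.Frame P] (f : FrameHom A B) (g : FrameHom A C)
    (f' : FrameHom C P) (g' : FrameHom B P) : Prop :=
  g'.comp f = f'.comp g ∧
    ∀ (Q : Type) [Order.Frame Q], ∀ (u : FrameHom B Q) (v : FrameHom C Q),
      u.comp f = v.comp g → ∃! k : FrameHom P Q, k.comp g' = u ∧ k.comp f' = v

/-- A biframe `(L₀, L₁, L₂)`: an ambient frame `L₀` together with two component frames
`L₁, L₂` embedded in it by frame homomorphisms `e1, e2` (so the images are subframes),
such that the union of the images is a subbasis of `L₀`: every element of `L₀` is a join
of finite meets `e1 a ⊓ e2 b` of elements coming from the two components. -/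
structure Biframe where
  L0 : Type
  L1 : Type
  L2 : Type
  [fr0 : Order.Frame L0]
  [fr1 : Order.Frame L1]
  [fr2 : Order.Frame L2]
  e1 : FrameHom L1 L0
  e2 : FrameHom L2 L0
  inj1 : Function.Injective e1
  inj2 : Function.Injective e2
  gen : ∀ x : L0, ∃ A : Set (L1 × L2), x = sSup ((fun p => e1 p.1 ⊓ e2 p.2) '' A)

attribute [instance] Biframe.fr0 Biframe.fr1 Biframe.fr2

/-- A biframe homomorphism: a frame homomorphism of the ambient frames restricting to frame
homomorphisms of the component frames. -/
@[ext]
structure BiframeHom (L M : Biframe) where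
  h0 : FrameHom L.L0 M.L0
  h1 : FrameHom L.L1 M.L1
  h2 : FrameHom L.L2 M.L2
  comm1 : h0.comp L.e1 = M.e1.comp h1
  comm2 : h0.comp L.e2 = M.e2.comp h2

/-- Composition of biframe homomorphisms. -/
def BiframeHom.comp {L M N : Biframe} (g : BiframeHom M N) (f : BiframeHom L M) :
    BiframeHom L N where
  h0 := g.h0.comp f.h0
  h1 := g.h1.comp f.h1
  h2 := g.h2.comp f.h2
  comm1 := by rw [FrameHom.comp_assoc, f.comm1, ← FrameHom.comp_assoc, g.comm1,
    FrameHom.comp_assoc]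
  comm2 := by rw [FrameHom.comp_assoc, f.comm2, ← FrameHom.comp_assoc, g.comm2,
    FrameHom.comp_assoc]

/-- The identity biframe homomorphism. -/
def BiframeHom.id (L : Biframe) : BiframeHom L L where
  h0 := FrameHom.id _
  h1 := FrameHom.id _
  h2 := FrameHom.id _
  comm1 := by rw [FrameHom.id_comp, FrameHom.comp_id]
  comm2 := by rw [FrameHom.id_comp, FrameHom.comp_id]

/-- Monomorphisms in the category `BiFrm`. -/
def BiframeHom.IsMono {L M : Biframe} (m : BiframeHom L M) : Prop :=
  ∀ (N : Biframe) (g h : BiframeHom N L), m.comp g = m.comp h → g = h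

/-- Epimorphisms in the category `BiFrm`. -/
def BiframeHom.IsEpi {L M : Biframe} (f : BiframeHom L M) : Prop :=
  ∀ (N : Biframe) (g h : BiframeHom M N), g.comp f = h.comp f → g = h

/-- Isomorphisms in the category `BiFrm`. -/
def BiframeHom.IsIso {L M : Biframe} (f : BiframeHom L M) : Prop :=
  ∃ g : BiframeHom M L, g.comp f = BiframeHom.id L ∧ f.comp g = BiframeHom.id M

/-- Extremal epimorphisms in the category `BiFrm`: epimorphisms `f` such that whenever
`f = m ∘ h` with `m` a monomorphism, `m` is an isomorphism. -/
def BiframeHom.IsExtremalEpi {L M : Biframe} (f : BiframeHom L M) : Prop :=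
  f.IsEpi ∧ ∀ (N : Biframe) (h : BiframeHom L N) (m : BiframeHom N M),
    m.IsMono → f = m.comp h → m.IsIso

/-- The underlying frame homomorphism `f₀` of the biframe homomorphism `f` is the pushout of
`f₁ ⊕ f₂` along `q_L` in `Frm`: for any presentation of the coproducts `L₁ ⊕ L₂` and
`M₁ ⊕ M₂` with the canonical quotient maps `q_L`, `q_M`, and the induced map
`F = f₁ ⊕ f₂` between them, the square `(F, q_L, f₀, q_M)` is a pushout square. -/
def BiframeHom.IsCanonicalPushout {L M : Biframe} (f : BiframeHom L M) : Prop :=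
  ∀ (K : Type) [Order.Frame K], ∀ (i1 : FrameHom L.L1 K) (i2 : FrameHom L.L2 K),
    IsCoprod i1 i2 →
    ∀ qL : FrameHom K L.L0, qL.comp i1 = L.e1 → qL.comp i2 = L.e2 →
    ∀ (K' : Type) [Order.Frame K'], ∀ (j1 : FrameHom M.L1 K') (j2 : FrameHom M.L2 K'),
      IsCoprod j1 j2 →
      ∀ qM : FrameHom K' M.L0, qM.comp j1 = M.e1 → qM.comp j2 = M.e2 →
      ∀ F : FrameHom K K', F.comp i1 = j1.comp f.h1 → F.comp i2 = j2.comp f.h2 →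
        IsPushoutSquare F qL f.h0 qM

/-- A frame congruence: an equivalence relation respecting finite meets and arbitrary
(set-indexed) joins. -/
def IsFrameCong {L : Type} [Order.Frame L] (r : L → L → Prop) : Prop :=
  Equivalence r ∧
    (∀ a b c d : L, r a b → r c d → r (a ⊓ c) (b ⊓ d)) ∧
    (∀ (ι : Type) (a b : ι → L), (∀ i, r (a i) (b i)) → r (⨆ i, a i) (⨆ i, b i))

/-- The frame congruence generated by a relation. -/
def congGen {L : Type} [Order.Frame L] (R : Set (L × L)) : L → L → Prop :=
  fun a b => ∀ r : L → L → Prop, IsFrameCong r → (∀ p ∈ R, r p.1 p.2) → r a b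

/-- `r` represents a subbilocale of `L`: it is the kernel congruence of (the ambient frame
homomorphism of) some extremal epimorphism in `BiFrm` with domain `L`. These relations,
ordered by reverse inclusion, form a faithful copy of the poset `𝒮(L)` of subbilocales. -/
def IsSubbilocaleRep (L : Biframe) (r : L.L0 → L.L0 → Prop) : Prop :=
  ∃ (N : Biframe) (f : BiframeHom L N), f.IsExtremalEpi ∧
    ∀ a b : L.L0, r a b ↔ f.h0 a = f.h0 b

/-- The image `𝒮(e_{L₁})⟨f₁⟩` in `𝒮(L₀)` of a sublocale of the first component `L₁`, given
by a congruence `r1` on `L₁`: the pushout along the inclusion `e_{L₁}` corresponds to the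
congruence of `L₀` generated by the image of `r1`. -/
def imCong1 (L : Biframe) (r1 : L.L1 → L.L1 → Prop) : L.L0 → L.L0 → Prop :=
  congGen {p | ∃ a b : L.L1, r1 a b ∧ p = (L.e1 a, L.e1 b)}

/-- The image `𝒮(e_{L₂})⟨f₂⟩` in `𝒮(L₀)` of a sublocale of the second component. -/
def imCong2 (L : Biframe) (r2 : L.L2 → L.L2 → Prop) : L.L0 → L.L0 → Prop :=
  congGen {p | ∃ a b : L.L2, r2 a b ∧ p = (L.e2 a, L.e2 b)}

set_option linter.unusedSectionVars false
set_option maxHeartbeats 1000000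

section CongBasics
variable {L M : Type} [Order.Frame L] [Order.Frame M]

theorem relext {r s : L → L → Prop} (h : ∀ a b, r a b ↔ s a b) : r = s := by
  funext a b; exact propext (h a b)

theorem isFrameCong_congGen (R : Set (L × L)) : IsFrameCong (congGen R) := by
  refine ⟨⟨fun a r hr _ => hr.1.refl a, fun h r hr hR => hr.1.symm (h r hr hR),
    fun h h' r hr hR => hr.1.trans (h r hr hR) (h' r hr hR)⟩,
    fun a b c d h h' r hr hR => hr.2.1 _ _ _ _ (h r hr hR) (h' r hr hR),
    fun ι a b h r hr hR => hr.2.2 ι a b (fun i => h i r hr hR)⟩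

theorem congGen_le {R : Set (L × L)} {s : L → L → Prop} (hs : IsFrameCong s)
    (hR : ∀ p ∈ R, s p.1 p.2) : ∀ a b, congGen R a b → s a b :=
  fun _ _ h => h s hs hR

theorem mem_congGen {R : Set (L × L)} {p : L × L} (hp : p ∈ R) : congGen R p.1 p.2 :=
  fun _ _ hR => hR p hp

theorem congGen_mono {R S : Set (L × L)} (h : ∀ p ∈ R, congGen S p.1 p.2) :
    ∀ a b, congGen R a b → congGen S a b :=
  congGen_le (isFrameCong_congGen S) h

theorem congGen_eq_of {R S : Set (L × L)} (h1 : ∀ p ∈ R, congGen S p.1 p.2)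
    (h2 : ∀ p ∈ S, congGen R p.1 p.2) : congGen R = congGen S :=
  relext fun a b => ⟨fun h => congGen_mono h1 a b h, fun h => congGen_mono h2 a b h⟩

/-- kernel congruence of a frame hom -/
theorem isFrameCong_ker (f : FrameHom L M) : IsFrameCong (fun a b => f a = f b) :=
  ⟨⟨fun _ => rfl, Eq.symm, Eq.trans⟩,
   fun a b c d h h' => by simp only [map_inf, h, h'],
   fun ι a b h => by simp only [map_iSup]; exact iSup_congr h⟩

/-- pullback of a congruence along a frame hom -/
theorem isFrameCong_comap {r : M → M → Prop} (hr : IsFrameCong r) (f : FrameHom L M) :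
    IsFrameCong (fun a b => r (f a) (f b)) :=
  ⟨⟨fun a => hr.1.refl _, fun h => hr.1.symm h, fun h h' => hr.1.trans h h'⟩,
   fun a b c d h h' => by simpa only [map_inf] using hr.2.1 _ _ _ _ h h',
   fun ι a b h => by simpa only [map_iSup] using hr.2.2 ι (fun i => f (a i)) (fun i => f (b i)) h⟩

end CongBasics

section Quot
variable {L : Type} [Order.Frame L] (c : L → L → Prop)

/-- the "nucleus": largest element of the congruence class -/
def nu (x : L) : L := sSup {y | c x y}

variable {c} (hc : IsFrameCong c)
include hc

theorem cong_nu (x : L) : c x (nu c x) := by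
  haveI : Nonempty {y // y ∈ {y | c x y}} := ⟨⟨x, hc.1.refl x⟩⟩
  have h := hc.2.2 {y // y ∈ {y | c x y}} (fun _ => x) (fun y => y.1) (fun y => y.2)
  rw [iSup_const] at h
  rw [nu, sSup_eq_iSup']
  exact h

theorem le_nu (x : L) : x ≤ nu c x := le_sSup (hc.1.refl x)

theorem nu_eq_of_cong {x y : L} (h : c x y) : nu c x = nu c y := by
  have : {z | c x z} = {z | c y z} := by
    ext z; exact ⟨fun hz => hc.1.trans (hc.1.symm h) hz, fun hz => hc.1.trans h hz⟩
  simp [nu, this]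

theorem cong_of_nu_eq {x y : L} (h : nu c x = nu c y) : c x y :=
  hc.1.trans (cong_nu hc x) (h ▸ hc.1.symm (cong_nu hc y))

theorem nu_idem (x : L) : nu c (nu c x) = nu c x :=
  (nu_eq_of_cong hc (hc.1.symm (cong_nu hc x)))

theorem le_nu_of_cong {x y : L} (h : c x y) : y ≤ nu c x := le_sSup h

theorem nu_mono {x y : L} (h : x ≤ y) : nu c x ≤ nu c y := by
  have h2 : c y (nu c x ⊔ y) := by
    have := hc.2.2 Bool (fun b => if b then x else y) (fun b => if b then nu c x else y)
      (by rintro (_|_); exacts [hc.1.refl y, cong_nu hc x])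
    simpa [iSup_bool_eq, sup_eq_right.mpr h] using this
  exact le_trans le_sup_left (le_nu_of_cong hc h2)

theorem nu_inf (x y : L) : nu c (x ⊓ y) = nu c x ⊓ nu c y := by
  refine le_antisymm (le_inf (nu_mono hc inf_le_left) (nu_mono hc inf_le_right)) ?_
  exact le_nu_of_cong hc (hc.2.1 _ _ _ _ (cong_nu hc x) (cong_nu hc y))

theorem nu_top : nu c (⊤ : L) = ⊤ := le_antisymm le_top (le_nu hc ⊤)

theorem cong_sSup_nu (S : Set L) : c (sSup S) (sSup ((nu c) '' S)) := by
  have := hc.2.2 S (fun y => (y : L)) (fun y => nu c y) (fun y => cong_nu hc y)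
  simpa [← sSup_eq_iSup', sSup_image'] using this

theorem nu_sSup_image (S : Set L) : nu c (sSup ((nu c) '' S)) = nu c (sSup S) :=
  nu_eq_of_cong hc (hc.1.symm (cong_sSup_nu hc S))

end Quot

section QuotFrame
variable {L M : Type} [Order.Frame L] [Order.Frame M]

/-- The quotient frame of `L` by the frame congruence `c`, realized as the set of
`nu`-fixed points. -/
def QuotFrame (c : L → L → Prop) (_hc : IsFrameCong c) : Type := {x : L // nu c x = x}

namespace QuotFrame
variable {c : L → L → Prop} (hc : IsFrameCong c)

instance : PartialOrder (QuotFrame c hc) := Subtype.partialOrder _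

instance : SupSet (QuotFrame c hc) :=
  ⟨fun S => ⟨nu c (sSup (Subtype.val '' S)), nu_idem hc _⟩⟩

theorem le_def {a b : QuotFrame c hc} : a ≤ b ↔ a.1 ≤ b.1 := Iff.rfl

theorem isLUB (S : Set (QuotFrame c hc)) : IsLUB S (sSup S) := by
  constructor
  · intro a ha
    show a.1 ≤ nu c (sSup (Subtype.val '' S))
    exact le_trans (le_sSup (Set.mem_image_of_mem _ ha)) (le_nu hc _)
  · intro b hb
    have h1 : sSup (Subtype.val '' S) ≤ b.1 := by
      apply sSup_le; rintro x ⟨a, ha, rfl⟩; exact hb ha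
    calc (sSup S).1 = nu c (sSup (Subtype.val '' S)) := rfl
      _ ≤ nu c b.1 := nu_mono hc h1
      _ = b.1 := b.2

/-- make an element of the quotient -/
def mk (x : L) (h : nu c x = x) : QuotFrame c hc := ⟨x, h⟩

instance : CompleteLattice (QuotFrame c hc) := completeLatticeOfSup _ (isLUB hc)

theorem coe_sSup (S : Set (QuotFrame c hc)) :
    (sSup S).1 = nu c (sSup (Subtype.val '' S)) := rfl

theorem coe_inf (a b : QuotFrame c hc) : (a ⊓ b).1 = a.1 ⊓ b.1 := by
  have hm : nu c (a.1 ⊓ b.1) = a.1 ⊓ b.1 := by rw [nu_inf hc, a.2, b.2]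
  refine le_antisymm (le_inf ((le_def hc).mp inf_le_left) ((le_def hc).mp inf_le_right)) ?_
  exact (le_def hc).mp (le_inf
    ((le_def hc (a := mk hc (a.1 ⊓ b.1) hm) (b := a)).mpr (inf_le_left (a := a.1) (b := b.1)))
    ((le_def hc (a := mk hc (a.1 ⊓ b.1) hm) (b := b)).mpr (inf_le_right (a := a.1) (b := b.1))))

theorem coe_top : ((⊤ : QuotFrame c hc)).1 = ⊤ :=
  le_antisymm le_top ((le_def hc).mp (le_top (a := mk hc ⊤ (nu_top hc))))

instance : Order.Frame (QuotFrame c hc) := by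
  apply Order.Frame.ofMinimalAxioms
  refine ⟨?_⟩
  intro a S
  rw [le_def hc, coe_inf hc, coe_sSup hc]
  have h1 : a.1 ⊓ nu c (sSup (Subtype.val '' S)) ≤ nu c (a.1 ⊓ sSup (Subtype.val '' S)) := by
    calc a.1 ⊓ nu c (sSup (Subtype.val '' S))
        ≤ nu c a.1 ⊓ nu c (sSup (Subtype.val '' S)) := inf_le_inf_right _ (le_nu hc _)
      _ = nu c (a.1 ⊓ sSup (Subtype.val '' S)) := (nu_inf hc _ _).symm
  refine le_trans h1 ?_
  have h2 : a.1 ⊓ sSup (Subtype.val '' S) = sSup ((fun b => a.1 ⊓ b) '' (Subtype.val '' S)) := by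
    rw [inf_sSup_eq, sSup_image]
  rw [h2]
  have h3 : (⨆ b ∈ S, a ⊓ b) = sSup ((fun b => a ⊓ b) '' S) := by rw [sSup_image]
  rw [h3, coe_sSup hc]
  apply nu_mono hc
  apply sSup_le
  rintro x ⟨y, ⟨b, hb, rfl⟩, rfl⟩
  exact le_trans (le_of_eq (coe_inf hc a b).symm)
    (le_sSup (Set.mem_image_of_mem _ (Set.mem_image_of_mem _ hb)))

/-- the quotient frame homomorphism -/
def quotHom : FrameHom L (QuotFrame c hc) where
  toFun x := ⟨nu c x, nu_idem hc x⟩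
  map_inf' x y := Subtype.ext <| (nu_inf hc x y).trans
    (coe_inf hc ⟨nu c x, nu_idem hc x⟩ ⟨nu c y, nu_idem hc y⟩).symm
  map_top' := Subtype.ext <| by rw [coe_top hc]; exact nu_top hc
  map_sSup' S := Subtype.ext <| by
    rw [coe_sSup hc]
    show nu c (sSup S) = nu c (sSup (Subtype.val '' ((fun x => (⟨nu c x, _⟩ : QuotFrame c hc)) '' S)))
    rw [Set.image_image]
    exact (nu_sSup_image hc S).symm

theorem quotHom_apply (x : L) : (quotHom hc x).1 = nu c x := rfl

theorem quotHom_surjective : Function.Surjective (quotHom hc) := by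
  intro q; exact ⟨q.1, Subtype.ext (by rw [quotHom_apply, q.2])⟩

theorem quotHom_eq_iff {x y : L} : quotHom hc x = quotHom hc y ↔ c x y := by
  constructor
  · intro h; exact cong_of_nu_eq hc (congrArg Subtype.val h)
  · intro h; exact Subtype.ext (nu_eq_of_cong hc h)

theorem quotHom_val (q : QuotFrame c hc) : quotHom hc q.1 = q :=
  Subtype.ext (by rw [quotHom_apply, q.2])

/-- the induced homomorphism out of the quotient -/
def inducedHom (g : FrameHom L M) (hg : ∀ a b, c a b → g a = g b) :
    FrameHom (QuotFrame c hc) M where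
  toFun q := g q.1
  map_inf' a b := by show g (a ⊓ b).1 = g a.1 ⊓ g b.1; rw [coe_inf hc, map_inf]
  map_top' := by show g ((⊤ : QuotFrame c hc)).1 = ⊤; rw [coe_top hc, map_top]
  map_sSup' S := by
    show g ((sSup S)).1 = _
    rw [coe_sSup hc]
    have h1 : g (nu c (sSup (Subtype.val '' S))) = g (sSup (Subtype.val '' S)) :=
      (hg _ _ (cong_nu hc _)).symm
    rw [h1, map_sSup]
    exact congrArg sSup (Set.image_image g (Subtype.val : QuotFrame c hc → L) S)

theorem inducedHom_quotHom (g : FrameHom L M) (hg : ∀ a b, c a b → g a = g b) (x : L) :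
    inducedHom hc g hg (quotHom hc x) = g x := (hg _ _ (cong_nu hc x)).symm

theorem inducedHom_apply (g : FrameHom L M) (hg : ∀ a b, c a b → g a = g b)
    (q : QuotFrame c hc) : inducedHom hc g hg q = g q.1 := rfl

end QuotFrame
end QuotFrame

section Chain
open TopologicalSpace

theorem sier_up {U : Set Prop} (hU : IsOpen U) {p q : Prop} (hpq : p → q) (hp : p ∈ U) :
    q ∈ U := by
  induction hU with
  | basic V hV =>
    simp only [Set.mem_singleton_iff] at hV; subst hV
    simp only [Set.mem_singleton_iff] at hp ⊢
    rw [eq_true (hpq (hp ▸ trivial))]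
  | univ => trivial
  | inter V W _ _ ihV ihW => exact ⟨ihV hp.1, ihW hp.2⟩
  | sUnion S _ ih => obtain ⟨V, hV, hpV⟩ := hp; exact ⟨V, hV, ih V hV hpV⟩

variable {Q R : Type} [Order.Frame Q] [Order.Frame R]

/-- the frame hom `Opens Prop → Q` classifying the element `a` -/
def chainHom (a : Q) : FrameHom (Opens Prop) Q where
  toFun U := (⨆ _ : (False ∈ U), (⊤ : Q)) ⊔ (⨆ _ : (True ∈ U), a)
  map_inf' U V := by
    by_cases hFU : False ∈ (U : Set Prop) <;> by_cases hFV : False ∈ (V : Set Prop) <;>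
      by_cases hTU : True ∈ (U : Set Prop) <;> by_cases hTV : True ∈ (V : Set Prop) <;>
      first
      | exact absurd (sier_up U.2 (fun _ => trivial) hFU) hTU
      | exact absurd (sier_up V.2 (fun _ => trivial) hFV) hTV
      | (simp only [← SetLike.mem_coe, Opens.coe_inf, Set.mem_inter_iff]
         simp [hFU, hFV, hTU, hTV])
  map_top' := by simp
  map_sSup' S := by
    by_cases hF : ∃ U ∈ S, False ∈ U
    · obtain ⟨U, hU, hFU⟩ := hF
      have hTU : True ∈ U := sier_up U.2 (fun _ => trivial) hFU
      have h1 : False ∈ sSup S := Opens.mem_sSup.2 ⟨U, hU, hFU⟩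
      have h2 : True ∈ sSup S := Opens.mem_sSup.2 ⟨U, hU, hTU⟩
      have hfU : (⨆ _ : (False ∈ U), (⊤ : Q)) ⊔ (⨆ _ : (True ∈ U), a) = ⊤ := by
        rw [iSup_pos hFU]; simp
      rw [iSup_pos h1, iSup_pos h2, top_sup_eq]
      exact (top_unique (le_trans (le_of_eq hfU.symm)
        (le_sSup (Set.mem_image_of_mem
          (fun U : Opens Prop => (⨆ _ : (False ∈ U), (⊤ : Q)) ⊔ (⨆ _ : (True ∈ U), a)) hU)))).symm
    · have h1 : ¬ False ∈ sSup S := fun h => hF (Opens.mem_sSup.1 h)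
      rw [iSup_neg h1, bot_sup_eq]
      by_cases hT : ∃ U ∈ S, True ∈ U
      · obtain ⟨U, hU, hTU⟩ := hT
        have hFU : ¬ False ∈ U := fun h => hF ⟨U, hU, h⟩
        have h2 : True ∈ sSup S := Opens.mem_sSup.2 ⟨U, hU, hTU⟩
        rw [iSup_pos h2]
        have hfU : (⨆ _ : (False ∈ U), (⊤ : Q)) ⊔ (⨆ _ : (True ∈ U), a) = a := by
          rw [iSup_neg hFU, iSup_pos hTU, bot_sup_eq]
        refine le_antisymm (le_trans (le_of_eq hfU.symm)
          (le_sSup (Set.mem_image_of_mem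
            (fun U : Opens Prop => (⨆ _ : (False ∈ U), (⊤ : Q)) ⊔ (⨆ _ : (True ∈ U), a)) hU))) ?_
        refine sSup_le ?_
        rintro x ⟨V, hV, rfl⟩
        exact sup_le (iSup_le fun h => absurd (show ∃ U ∈ S, False ∈ U from ⟨V, hV, h⟩) hF)
          (iSup_le fun _ => le_rfl)
      · have h2 : ¬ True ∈ sSup S := fun h => hT (Opens.mem_sSup.1 h)
        rw [iSup_neg h2]
        refine (bot_unique (sSup_le ?_)).symm
        rintro x ⟨V, hV, rfl⟩
        exact sup_le (iSup_le fun h => absurd (show ∃ U ∈ S, False ∈ U from ⟨V, hV, h⟩) hF)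
          (iSup_le fun h => absurd (show ∃ U ∈ S, True ∈ U from ⟨V, hV, h⟩) hT)

theorem chainHom_apply (a : Q) (U : Opens Prop) :
    chainHom a U = (⨆ _ : (False ∈ U), (⊤ : Q)) ⊔ (⨆ _ : (True ∈ U), a) := rfl

/-- the middle element of the Sierpinski chain -/
def U1 : Opens Prop := ⟨{True}, TopologicalSpace.GenerateOpen.basic _ rfl⟩

theorem not_false_mem_U1 : ¬ (False ∈ U1) := fun h => (Opens.mem_mk.1 h) ▸ trivial

theorem chainHom_U1 (a : Q) : chainHom a U1 = a := by
  rw [chainHom_apply, iSup_neg not_false_mem_U1, iSup_pos (show True ∈ U1 from rfl), bot_sup_eq]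

theorem comp_chainHom (g : FrameHom Q R) (a : Q) :
    g.comp (chainHom a) = chainHom (g a) := by
  apply FrameHom.ext; intro U
  simp only [FrameHom.comp_apply, chainHom_apply, map_sup, map_iSup, map_top]

/-- the frame hom `Prop → Q` -/
def propHom : FrameHom Prop Q where
  toFun p := ⨆ _ : p, (⊤ : Q)
  map_inf' p q := by
    by_cases hp : p <;> by_cases hq : q <;> simp [hp, hq]
  map_top' := by simp
  map_sSup' S := by
    simp only [sSup_Prop_eq]
    by_cases h : ∃ p ∈ S, p
    · obtain ⟨p, hp, hpp⟩ := h
      rw [iSup_pos ⟨p, hp, hpp⟩]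
      refine (top_unique (le_trans (le_of_eq (iSup_pos (f := fun _ => (⊤ : Q)) hpp).symm)
        (le_sSup (Set.mem_image_of_mem (fun p : Prop => ⨆ _ : p, (⊤ : Q)) hp)))).symm
    · rw [iSup_neg h]
      refine (bot_unique (sSup_le ?_)).symm
      rintro x ⟨p, hp, rfl⟩
      exact iSup_le fun hpp => absurd ⟨p, hp, hpp⟩ h

theorem propHom_apply (p : Prop) : (propHom (Q := Q) p) = ⨆ _ : p, (⊤ : Q) := rfl

theorem comp_propHom (g : FrameHom Q R) : g.comp (propHom) = propHom := by
  apply FrameHom.ext; intro p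
  simp only [FrameHom.comp_apply, propHom_apply, map_iSup, map_top]

theorem chainHom_propHom (a : Q) :
    (chainHom a).comp (propHom) = propHom := by
  apply FrameHom.ext; intro p
  simp only [FrameHom.comp_apply, propHom_apply, map_iSup, map_top]

end Chain



section BiframeLemmas

theorem FrameHom.congr_fun' {A B : Type} [Order.Frame A] [Order.Frame B] {f g : FrameHom A B}
    (h : f = g) (x : A) : f x = g x := congrArg (fun k => k x) (congrArg DFunLike.coe h)

theorem comm1_apply {L M : Biframe} (f : BiframeHom L M) (a : L.L1) :
    f.h0 (L.e1 a) = M.e1 (f.h1 a) := FrameHom.congr_fun' f.comm1 a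

theorem comm2_apply {L M : Biframe} (f : BiframeHom L M) (a : L.L2) :
    f.h0 (L.e2 a) = M.e2 (f.h2 a) := FrameHom.congr_fun' f.comm2 a

/-- a biframe homomorphism is determined by its component parts -/
theorem biframeHom_eq_of_12 {L M : Biframe} {g g' : BiframeHom L M}
    (h1 : g.h1 = g'.h1) (h2 : g.h2 = g'.h2) : g = g' := by
  have h0 : g.h0 = g'.h0 := by
    apply FrameHom.ext; intro x
    obtain ⟨A, rfl⟩ := L.gen x
    rw [map_sSup, map_sSup, Set.image_image, Set.image_image]
    congr 1
    apply Set.image_congr; intro p _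
    rw [map_inf, map_inf, comm1_apply, comm1_apply, comm2_apply, comm2_apply, h1, h2]
  cases g; cases g'
  simp only at h0 h1 h2
  subst h0; subst h1; subst h2; rfl

theorem epi_of_surj {L M : Biframe} (f : BiframeHom L M)
    (h0 : Function.Surjective f.h0) (h1 : Function.Surjective f.h1)
    (h2 : Function.Surjective f.h2) : f.IsEpi := by
  intro N g g' h
  have e1 : g.h1 = g'.h1 := by
    apply FrameHom.ext; intro y
    obtain ⟨x, rfl⟩ := h1 y
    exact FrameHom.congr_fun' (congrArg BiframeHom.h1 h) x
  have e2 : g.h2 = g'.h2 := by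
    apply FrameHom.ext; intro y
    obtain ⟨x, rfl⟩ := h2 y
    exact FrameHom.congr_fun' (congrArg BiframeHom.h2 h) x
  exact biframeHom_eq_of_12 e1 e2

theorem mono_of_inj {L M : Biframe} (m : BiframeHom L M)
    (i1 : Function.Injective m.h1) (i2 : Function.Injective m.h2) : m.IsMono := by
  intro N g g' h
  have e1 : g.h1 = g'.h1 := by
    apply FrameHom.ext; intro x
    exact i1 (FrameHom.congr_fun' (congrArg BiframeHom.h1 h) x)
  have e2 : g.h2 = g'.h2 := by
    apply FrameHom.ext; intro x
    exact i2 (FrameHom.congr_fun' (congrArg BiframeHom.h2 h) x)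
  exact biframeHom_eq_of_12 e1 e2

/-- the inverse of a bijective frame homomorphism -/
noncomputable def invFrameHom {A B : Type} [Order.Frame A] [Order.Frame B] (f : FrameHom A B)
    (hf : Function.Bijective f) : FrameHom B A where
  toFun := (Equiv.ofBijective f hf).symm
  map_inf' a b := hf.injective (by
    have key : ∀ x, f ((Equiv.ofBijective f hf).symm x) = x := fun x =>
      (Equiv.ofBijective f hf).apply_symm_apply x
    rw [key, map_inf, key, key])
  map_top' := hf.injective (by
    have key : ∀ x, f ((Equiv.ofBijective f hf).symm x) = x := fun x =>
      (Equiv.ofBijective f hf).apply_symm_apply x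
    rw [key, map_top])
  map_sSup' S := hf.injective (by
    have key : ∀ x, f ((Equiv.ofBijective f hf).symm x) = x := fun x =>
      (Equiv.ofBijective f hf).apply_symm_apply x
    rw [key, map_sSup, Set.image_image]
    simp only [key, Set.image_id'])

theorem invFrameHom_right {A B : Type} [Order.Frame A] [Order.Frame B] (f : FrameHom A B)
    (hf : Function.Bijective f) (b : B) : f (invFrameHom f hf b) = b :=
  (Equiv.ofBijective f hf).apply_symm_apply b

theorem invFrameHom_left {A B : Type} [Order.Frame A] [Order.Frame B] (f : FrameHom A B)
    (hf : Function.Bijective f) (a : A) : invFrameHom f hf (f a) = a :=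
  (Equiv.ofBijective f hf).symm_apply_apply a

theorem iso_of_bij {L M : Biframe} (m : BiframeHom L M) (b0 : Function.Bijective m.h0)
    (b1 : Function.Bijective m.h1) (b2 : Function.Bijective m.h2) : m.IsIso := by
  refine ⟨⟨invFrameHom m.h0 b0, invFrameHom m.h1 b1, invFrameHom m.h2 b2, ?_, ?_⟩, ?_, ?_⟩
  · apply FrameHom.ext; intro b
    apply b0.injective
    show m.h0 (invFrameHom m.h0 b0 (M.e1 b)) = m.h0 (L.e1 (invFrameHom m.h1 b1 b))
    rw [invFrameHom_right, comm1_apply, invFrameHom_right]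
  · apply FrameHom.ext; intro b
    apply b0.injective
    show m.h0 (invFrameHom m.h0 b0 (M.e2 b)) = m.h0 (L.e2 (invFrameHom m.h2 b2 b))
    rw [invFrameHom_right, comm2_apply, invFrameHom_right]
  · refine biframeHom_eq_of_12 ?_ ?_ <;> apply FrameHom.ext <;> intro x
    · exact invFrameHom_left m.h1 b1 x
    · exact invFrameHom_left m.h2 b2 x
  · refine biframeHom_eq_of_12 ?_ ?_ <;> apply FrameHom.ext <;> intro x
    · exact invFrameHom_right m.h1 b1 x
    · exact invFrameHom_right m.h2 b2 x

end BiframeLemmas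



section TestBiframes
open TopologicalSpace

theorem propHom_injective : Function.Injective (propHom (Q := Opens Prop)) := by
  intro p q h
  have key : ∀ s : Prop, (True ∈ propHom (Q := Opens Prop) s) = s := by
    intro s
    simp only [propHom_apply]
    apply propext
    constructor
    · rintro hm
      by_contra hs
      rw [iSup_neg hs] at hm
      exact hm
    · intro hs
      rw [iSup_pos hs]
      exact Opens.mem_top True
  rw [← key p, ← key q, h]

theorem propHom_true {Q : Type} [Order.Frame Q] : propHom (Q := Q) True = ⊤ := by
  rw [propHom_apply, iSup_pos trivial]

/-- the test biframe `(Opens Prop, Opens Prop, Prop)` -/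
def testBF1 : Biframe where
  L0 := Opens Prop
  L1 := Opens Prop
  L2 := Prop
  e1 := FrameHom.id _
  e2 := propHom
  inj1 := fun _ _ h => h
  inj2 := propHom_injective
  gen x := by
    refine ⟨{(x, True)}, ?_⟩
    rw [Set.image_singleton, sSup_singleton]
    show x = FrameHom.id _ x ⊓ propHom True
    rw [propHom_true]
    simp

/-- the test biframe `(Opens Prop, Prop, Opens Prop)` -/
def testBF2 : Biframe where
  L0 := Opens Prop
  L1 := Prop
  L2 := Opens Prop
  e1 := propHom
  e2 := FrameHom.id _
  inj1 := propHom_injective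
  inj2 := fun _ _ h => h
  gen x := by
    refine ⟨{(True, x)}, ?_⟩
    rw [Set.image_singleton, sSup_singleton]
    show x = propHom True ⊓ FrameHom.id _ x
    rw [propHom_true]
    simp

/-- the biframe homomorphism out of `testBF1` classifying an element of the first
component -/
def testHom1 (P : Biframe) (a : P.L1) : BiframeHom testBF1 P where
  h0 := P.e1.comp (chainHom a)
  h1 := chainHom a
  h2 := propHom
  comm1 := by
    show (P.e1.comp (chainHom a)).comp (FrameHom.id _) = P.e1.comp (chainHom a)
    rw [FrameHom.comp_id]
  comm2 := by
    show (P.e1.comp (chainHom a)).comp propHom = P.e2.comp propHom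
    rw [FrameHom.comp_assoc, chainHom_propHom, comp_propHom, comp_propHom]

def testHom2 (P : Biframe) (a : P.L2) : BiframeHom testBF2 P where
  h0 := P.e2.comp (chainHom a)
  h1 := propHom
  h2 := chainHom a
  comm1 := by
    show (P.e2.comp (chainHom a)).comp propHom = P.e1.comp propHom
    rw [FrameHom.comp_assoc, chainHom_propHom, comp_propHom, comp_propHom]
  comm2 := by
    show (P.e2.comp (chainHom a)).comp (FrameHom.id _) = P.e2.comp (chainHom a)
    rw [FrameHom.comp_id]

theorem mono_inj1 {L M : Biframe} (m : BiframeHom L M) (hm : m.IsMono) :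
    Function.Injective m.h1 := by
  intro a b hab
  have key : m.comp (testHom1 L a) = m.comp (testHom1 L b) := by
    apply biframeHom_eq_of_12
    · show m.h1.comp (chainHom a) = m.h1.comp (chainHom b)
      rw [comp_chainHom, comp_chainHom, hab]
    · show m.h2.comp propHom = m.h2.comp propHom
      rfl
  have := hm _ _ _ key
  have h1 : (testHom1 L a).h1 = (testHom1 L b).h1 := congrArg BiframeHom.h1 this
  have h1u := FrameHom.congr_fun' h1 U1
  calc a = chainHom a U1 := (chainHom_U1 a).symm
    _ = chainHom b U1 := h1u
    _ = b := chainHom_U1 b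

theorem mono_inj2 {L M : Biframe} (m : BiframeHom L M) (hm : m.IsMono) :
    Function.Injective m.h2 := by
  intro a b hab
  have key : m.comp (testHom2 L a) = m.comp (testHom2 L b) := by
    apply biframeHom_eq_of_12
    · show m.h1.comp propHom = m.h1.comp propHom
      rfl
    · show m.h2.comp (chainHom a) = m.h2.comp (chainHom b)
      rw [comp_chainHom, comp_chainHom, hab]
  have := hm _ _ _ key
  have h2 : (testHom2 L a).h2 = (testHom2 L b).h2 := congrArg BiframeHom.h2 this
  have h2u := FrameHom.congr_fun' h2 U1
  calc a = chainHom a U1 := (chainHom_U1 a).symm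
    _ = chainHom b U1 := h2u
    _ = b := chainHom_U1 b

end TestBiframes



section QuotBiframe
open QuotFrame

theorem h0_surj_of_12 {L M : Biframe} (f : BiframeHom L M) (s1 : Function.Surjective f.h1)
    (s2 : Function.Surjective f.h2) : Function.Surjective f.h0 := by
  intro y
  obtain ⟨A, rfl⟩ := M.gen y
  refine ⟨sSup ((fun p => L.e1 (Function.surjInv s1 p.1) ⊓ L.e2 (Function.surjInv s2 p.2)) '' A), ?_⟩
  rw [map_sSup, Set.image_image]
  congr 1
  apply Set.image_congr; intro p _
  rw [map_inf, comm1_apply, comm2_apply, Function.surjInv_eq s1, Function.surjInv_eq s2]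

variable (L : Biframe) (c : L.L0 → L.L0 → Prop) (hc : IsFrameCong c)

/-- restriction of the congruence `c` to the first component -/
def cc1 : L.L1 → L.L1 → Prop := fun a b => c (L.e1 a) (L.e1 b)

def cc2 : L.L2 → L.L2 → Prop := fun a b => c (L.e2 a) (L.e2 b)

include hc in
theorem cc1_cong : IsFrameCong (cc1 L c) := isFrameCong_comap hc L.e1
include hc in
theorem cc2_cong : IsFrameCong (cc2 L c) := isFrameCong_comap hc L.e2

/-- the embedding of the quotiented first component into the quotiented ambient frame -/
def e1Q : FrameHom (QuotFrame (cc1 L c) (cc1_cong L c hc)) (QuotFrame c hc) :=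
  inducedHom (cc1_cong L c hc) ((quotHom hc).comp L.e1)
    (fun a b h => by
      show quotHom hc (L.e1 a) = quotHom hc (L.e1 b)
      exact (quotHom_eq_iff hc).2 h)

def e2Q : FrameHom (QuotFrame (cc2 L c) (cc2_cong L c hc)) (QuotFrame c hc) :=
  inducedHom (cc2_cong L c hc) ((quotHom hc).comp L.e2)
    (fun a b h => by
      show quotHom hc (L.e2 a) = quotHom hc (L.e2 b)
      exact (quotHom_eq_iff hc).2 h)

theorem e1Q_quot (a : L.L1) :
    e1Q L c hc (quotHom (cc1_cong L c hc) a) = quotHom hc (L.e1 a) :=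
  inducedHom_quotHom _ _ _ a

theorem e2Q_quot (a : L.L2) :
    e2Q L c hc (quotHom (cc2_cong L c hc) a) = quotHom hc (L.e2 a) :=
  inducedHom_quotHom _ _ _ a

theorem e1Q_inj : Function.Injective (e1Q L c hc) := by
  intro q q' h
  obtain ⟨a, rfl⟩ := quotHom_surjective (cc1_cong L c hc) q
  obtain ⟨b, rfl⟩ := quotHom_surjective (cc1_cong L c hc) q'
  rw [e1Q_quot, e1Q_quot] at h
  exact (quotHom_eq_iff _).2 ((quotHom_eq_iff hc).1 h)

theorem e2Q_inj : Function.Injective (e2Q L c hc) := by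
  intro q q' h
  obtain ⟨a, rfl⟩ := quotHom_surjective (cc2_cong L c hc) q
  obtain ⟨b, rfl⟩ := quotHom_surjective (cc2_cong L c hc) q'
  rw [e2Q_quot, e2Q_quot] at h
  exact (quotHom_eq_iff _).2 ((quotHom_eq_iff hc).1 h)

/-- the quotient biframe -/
def QB : Biframe where
  L0 := QuotFrame c hc
  L1 := QuotFrame (cc1 L c) (cc1_cong L c hc)
  L2 := QuotFrame (cc2 L c) (cc2_cong L c hc)
  e1 := e1Q L c hc
  e2 := e2Q L c hc
  inj1 := e1Q_inj L c hc
  inj2 := e2Q_inj L c hc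
  gen := by
    intro x
    obtain ⟨A, hA⟩ := L.gen x.1
    refine ⟨(fun p => (quotHom (cc1_cong L c hc) p.1, quotHom (cc2_cong L c hc) p.2)) '' A, ?_⟩
    rw [Set.image_image]
    have h2 : ∀ p : L.L1 × L.L2,
        e1Q L c hc (quotHom (cc1_cong L c hc) p.1) ⊓ e2Q L c hc (quotHom (cc2_cong L c hc) p.2)
          = quotHom hc (L.e1 p.1 ⊓ L.e2 p.2) := by
      intro p; rw [e1Q_quot, e2Q_quot, map_inf]
    calc x = quotHom hc x.1 := (quotHom_val hc x).symm
      _ = quotHom hc (sSup ((fun p => L.e1 p.1 ⊓ L.e2 p.2) '' A)) := by rw [← hA]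
      _ = sSup ((fun p => quotHom hc (L.e1 p.1 ⊓ L.e2 p.2)) '' A) := by
          rw [map_sSup, Set.image_image]
      _ = sSup ((fun p => e1Q L c hc (quotHom (cc1_cong L c hc) p.1)
            ⊓ e2Q L c hc (quotHom (cc2_cong L c hc) p.2)) '' A) := by
          congr 1
          exact (Set.image_congr (fun p _ => h2 p)).symm

/-- the quotient biframe homomorphism -/
def qB : BiframeHom L (QB L c hc) where
  h0 := quotHom hc
  h1 := quotHom (cc1_cong L c hc)
  h2 := quotHom (cc2_cong L c hc)
  comm1 := by
    apply FrameHom.ext; intro a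
    show quotHom hc (L.e1 a) = e1Q L c hc (quotHom (cc1_cong L c hc) a)
    rw [e1Q_quot]
  comm2 := by
    apply FrameHom.ext; intro a
    show quotHom hc (L.e2 a) = e2Q L c hc (quotHom (cc2_cong L c hc) a)
    rw [e2Q_quot]

theorem qB_extremal
    (hgen : ∀ s : L.L0 → L.L0 → Prop, IsFrameCong s →
      (∀ a b, cc1 L c a b → s (L.e1 a) (L.e1 b)) →
      (∀ a b, cc2 L c a b → s (L.e2 a) (L.e2 b)) →
      ∀ x y, c x y → s x y) :
    (qB L c hc).IsExtremalEpi := by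
  constructor
  · exact epi_of_surj _ (quotHom_surjective hc) (quotHom_surjective _) (quotHom_surjective _)
  · intro N' h m hmono heq
    have hh0 : ∀ x, m.h0 (h.h0 x) = quotHom hc x :=
      fun x => (FrameHom.congr_fun' (congrArg BiframeHom.h0 heq) x).symm
    have hh1 : ∀ x, m.h1 (h.h1 x) = quotHom (cc1_cong L c hc) x :=
      fun x => (FrameHom.congr_fun' (congrArg BiframeHom.h1 heq) x).symm
    have hh2 : ∀ x, m.h2 (h.h2 x) = quotHom (cc2_cong L c hc) x :=
      fun x => (FrameHom.congr_fun' (congrArg BiframeHom.h2 heq) x).symm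
    have mi1 : Function.Injective m.h1 := mono_inj1 m hmono
    have mi2 : Function.Injective m.h2 := mono_inj2 m hmono
    have hs1 : Function.Surjective h.h1 := by
      intro a'
      obtain ⟨x, hx⟩ := quotHom_surjective (cc1_cong L c hc) (m.h1 a')
      exact ⟨x, mi1 (by rw [hh1 x, ← hx])⟩
    have hs2 : Function.Surjective h.h2 := by
      intro a'
      obtain ⟨x, hx⟩ := quotHom_surjective (cc2_cong L c hc) (m.h2 a')
      exact ⟨x, mi2 (by rw [hh2 x, ← hx])⟩
    have hs0 : Function.Surjective h.h0 := h0_surj_of_12 h hs1 hs2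
    have hker_ge : ∀ x y, c x y → h.h0 x = h.h0 y := by
      refine fun x y hxy => hgen (fun u v => h.h0 u = h.h0 v) (isFrameCong_ker h.h0) ?_ ?_ x y hxy
      · intro a b hab
        rw [comm1_apply h, comm1_apply h]
        exact congrArg N'.e1 (mi1 (by rw [hh1 a, hh1 b]; exact (quotHom_eq_iff _).2 hab))
      · intro a b hab
        rw [comm2_apply h, comm2_apply h]
        exact congrArg N'.e2 (mi2 (by rw [hh2 a, hh2 b]; exact (quotHom_eq_iff _).2 hab))
    have mb0 : Function.Bijective m.h0 := by
      constructor
      · intro u v huv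
        obtain ⟨x, rfl⟩ := hs0 u
        obtain ⟨y, rfl⟩ := hs0 v
        apply hker_ge
        apply (quotHom_eq_iff hc).1
        rw [← hh0 x, ← hh0 y, huv]
      · intro z
        obtain ⟨x, hx⟩ := quotHom_surjective hc z
        exact ⟨h.h0 x, by rw [hh0 x, hx]⟩
    have mb1 : Function.Bijective m.h1 := by
      refine ⟨mi1, fun z => ?_⟩
      obtain ⟨x, hx⟩ := quotHom_surjective (cc1_cong L c hc) z
      exact ⟨h.h1 x, by rw [hh1 x, hx]⟩
    have mb2 : Function.Bijective m.h2 := by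
      refine ⟨mi2, fun z => ?_⟩
      obtain ⟨x, hx⟩ := quotHom_surjective (cc2_cong L c hc) z
      exact ⟨h.h2 x, by rw [hh2 x, hx]⟩
    exact iso_of_bij m mb0 mb1 mb2

end QuotBiframe



section MainLemmas
open QuotFrame

variable (L : Biframe)

/-- generators of the image congruence of the first component -/
def genSet1 (r1 : L.L1 → L.L1 → Prop) : Set (L.L0 × L.L0) :=
  {p | ∃ a b : L.L1, r1 a b ∧ p = (L.e1 a, L.e1 b)}

def genSet2 (r2 : L.L2 → L.L2 → Prop) : Set (L.L0 × L.L0) :=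
  {p | ∃ a b : L.L2, r2 a b ∧ p = (L.e2 a, L.e2 b)}

theorem imCong1_eq (r1 : L.L1 → L.L1 → Prop) : imCong1 L r1 = congGen (genSet1 L r1) := rfl
theorem imCong2_eq (r2 : L.L2 → L.L2 → Prop) : imCong2 L r2 = congGen (genSet2 L r2) := rfl

theorem isFrameCong_eq {A : Type} [Order.Frame A] : IsFrameCong (fun a b : A => a = b) :=
  ⟨⟨fun _ => rfl, Eq.symm, Eq.trans⟩, fun a b c d h h' => by rw [h, h'],
   fun ι a b h => iSup_congr h⟩

/-- Main Lemma B: any congruence generated by component congruences is a subbilocale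
representative, witnessed by the quotient biframe. -/
theorem form_to_rep (r1 : L.L1 → L.L1 → Prop) (r2 : L.L2 → L.L2 → Prop)
    (hr1 : IsFrameCong r1) (hr2 : IsFrameCong r2) :
    IsSubbilocaleRep L (congGen (genSet1 L r1 ∪ genSet2 L r2)) := by
  set c := congGen (genSet1 L r1 ∪ genSet2 L r2) with hcdef
  have hc : IsFrameCong c := isFrameCong_congGen _
  refine ⟨QB L c hc, qB L c hc, qB_extremal L c hc ?_, ?_⟩
  · intro s hs hs1 hs2 x y hxy
    refine hxy s hs ?_
    rintro p (⟨a, b, hab, rfl⟩ | ⟨a, b, hab, rfl⟩)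
    · have hp : ((L.e1 a, L.e1 b) : L.L0 × L.L0) ∈ genSet1 L r1 ∪ genSet2 L r2 :=
        Or.inl ⟨a, b, hab, rfl⟩
      exact hs1 a b (mem_congGen hp)
    · have hp : ((L.e2 a, L.e2 b) : L.L0 × L.L0) ∈ genSet1 L r1 ∪ genSet2 L r2 :=
        Or.inr ⟨a, b, hab, rfl⟩
      exact hs2 a b (mem_congGen hp)
  · intro a b
    exact ((quotHom_eq_iff hc).symm : c a b ↔ _)

/-- Main Lemma A: every subbilocale representative is the congruence generated by the kernel
congruences of the components. -/
theorem rep_to_form (r : L.L0 → L.L0 → Prop) (h : IsSubbilocaleRep L r) :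
    ∃ (r1 : L.L1 → L.L1 → Prop) (r2 : L.L2 → L.L2 → Prop), IsFrameCong r1 ∧ IsFrameCong r2 ∧
      r = congGen (genSet1 L r1 ∪ genSet2 L r2) := by
  obtain ⟨N, f, ⟨hepi, hext⟩, hker⟩ := h
  refine ⟨fun a b => f.h1 a = f.h1 b, fun a b => f.h2 a = f.h2 b,
    isFrameCong_ker _, isFrameCong_ker _, ?_⟩
  set c := congGen (genSet1 L (fun a b => f.h1 a = f.h1 b)
    ∪ genSet2 L (fun a b => f.h2 a = f.h2 b)) with hcdef
  have hc : IsFrameCong c := isFrameCong_congGen _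
  have hcr : ∀ x y, c x y → f.h0 x = f.h0 y := by
    refine congGen_le (isFrameCong_ker f.h0) ?_
    rintro p (⟨a, b, hab, rfl⟩ | ⟨a, b, hab, rfl⟩)
    · show f.h0 (L.e1 a) = f.h0 (L.e1 b)
      rw [comm1_apply, comm1_apply, hab]
    · show f.h0 (L.e2 a) = f.h0 (L.e2 b)
      rw [comm2_apply, comm2_apply, hab]
  -- the mediating mono `m : QB → N`
  have hm1res : ∀ a b, cc1 L c a b → f.h1 a = f.h1 b := by
    intro a b hab
    apply N.inj1
    rw [← comm1_apply, ← comm1_apply]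
    exact hcr _ _ hab
  have hm2res : ∀ a b, cc2 L c a b → f.h2 a = f.h2 b := by
    intro a b hab
    apply N.inj2
    rw [← comm2_apply, ← comm2_apply]
    exact hcr _ _ hab
  let m0 : FrameHom (QuotFrame c hc) N.L0 := inducedHom hc f.h0 hcr
  let m1 : FrameHom (QuotFrame (cc1 L c) (cc1_cong L c hc)) N.L1 :=
    inducedHom (cc1_cong L c hc) f.h1 hm1res
  let m2 : FrameHom (QuotFrame (cc2 L c) (cc2_cong L c hc)) N.L2 :=
    inducedHom (cc2_cong L c hc) f.h2 hm2res
  have hm0q : ∀ x, m0 (quotHom hc x) = f.h0 x := fun x => inducedHom_quotHom hc f.h0 hcr x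
  have hm1q : ∀ x, m1 (quotHom (cc1_cong L c hc) x) = f.h1 x :=
    fun x => inducedHom_quotHom _ f.h1 hm1res x
  have hm2q : ∀ x, m2 (quotHom (cc2_cong L c hc) x) = f.h2 x :=
    fun x => inducedHom_quotHom _ f.h2 hm2res x
  let m : BiframeHom (QB L c hc) N :=
    { h0 := m0, h1 := m1, h2 := m2
      comm1 := by
        apply FrameHom.ext; intro x
        obtain ⟨a, rfl⟩ := quotHom_surjective (cc1_cong L c hc) x
        show m0 (e1Q L c hc (quotHom (cc1_cong L c hc) a)) = N.e1 (m1 (quotHom _ a))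
        rw [e1Q_quot, hm0q, hm1q, comm1_apply]
      comm2 := by
        apply FrameHom.ext; intro x
        obtain ⟨a, rfl⟩ := quotHom_surjective (cc2_cong L c hc) x
        show m0 (e2Q L c hc (quotHom (cc2_cong L c hc) a)) = N.e2 (m2 (quotHom _ a))
        rw [e2Q_quot, hm0q, hm2q, comm2_apply] }
  have hfm : f = m.comp (qB L c hc) := by
    apply biframeHom_eq_of_12
    · apply FrameHom.ext; intro a
      exact (hm1q a).symm
    · apply FrameHom.ext; intro a
      exact (hm2q a).symm
  have hmono : m.IsMono := by
    apply mono_of_inj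
    · intro x y hxy
      obtain ⟨a, rfl⟩ := quotHom_surjective (cc1_cong L c hc) x
      obtain ⟨b, rfl⟩ := quotHom_surjective (cc1_cong L c hc) y
      have hxy' : f.h1 a = f.h1 b := by rw [← hm1q a, ← hm1q b]; exact hxy
      have hp : ((L.e1 a, L.e1 b) : L.L0 × L.L0) ∈ genSet1 L (fun a b => f.h1 a = f.h1 b)
          ∪ genSet2 L (fun a b => f.h2 a = f.h2 b) := Or.inl ⟨a, b, hxy', rfl⟩
      exact (quotHom_eq_iff _).2 (mem_congGen hp)
    · intro x y hxy
      obtain ⟨a, rfl⟩ := quotHom_surjective (cc2_cong L c hc) x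
      obtain ⟨b, rfl⟩ := quotHom_surjective (cc2_cong L c hc) y
      have hxy' : f.h2 a = f.h2 b := by rw [← hm2q a, ← hm2q b]; exact hxy
      have hp : ((L.e2 a, L.e2 b) : L.L0 × L.L0) ∈ genSet1 L (fun a b => f.h1 a = f.h1 b)
          ∪ genSet2 L (fun a b => f.h2 a = f.h2 b) := Or.inr ⟨a, b, hxy', rfl⟩
      exact (quotHom_eq_iff _).2 (mem_congGen hp)
  obtain ⟨w, hw1, hw2⟩ := hext _ (qB L c hc) m hmono hfm
  have hminj : Function.Injective m.h0 := by
    intro u v huv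
    have hu := FrameHom.congr_fun' (congrArg BiframeHom.h0 hw1) u
    have hv := FrameHom.congr_fun' (congrArg BiframeHom.h0 hw1) v
    calc u = w.h0 (m.h0 u) := hu.symm
      _ = w.h0 (m.h0 v) := by rw [huv]
      _ = v := hv
  apply relext; intro a b
  rw [hker a b]
  constructor
  · intro hfab
    have h2 : m.h0 (quotHom hc a) = m.h0 (quotHom hc b) := by
      show m0 (quotHom hc a) = m0 (quotHom hc b)
      rw [hm0q, hm0q]; exact hfab
    exact (quotHom_eq_iff hc).1 (hminj h2)
  · intro hcab
    exact hcr a b hcab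

end MainLemmas


/-- For a biframe `L`, the lattice `𝒮(L)` of subbilocales (realized as kernel congruences
of extremal epimorphisms, ordered by reverse inclusion, inside the congruence lattice
realizing the coframe `𝒮(L₀)` of sublocales of the ambient frame) coincides with the
sub-meet-semilattice of `𝒮(L₀)` generated by `𝒮(e_{L₁})[𝒮(L₁)] ∪ 𝒮(e_{L₂})[𝒮(L₂)]`:
the smallest collection of congruences containing the images of the sublocale lattices of
the two components and closed under binary meets of sublocales (i.e. joins of congruences,
`(c₁, c₂) ↦ congGen (c₁ ∪ c₂)`). -/
theorem subbilocales_eq_meet_semilattice_generated (L : Biframe)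
    (X : Set (L.L0 → L.L0 → Prop))
    (hX : X = ⋂₀ {Y : Set (L.L0 → L.L0 → Prop) |
      (∀ r1 : L.L1 → L.L1 → Prop, IsFrameCong r1 → imCong1 L r1 ∈ Y) ∧
      (∀ r2 : L.L2 → L.L2 → Prop, IsFrameCong r2 → imCong2 L r2 ∈ Y) ∧
      (∀ c1 ∈ Y, ∀ c2 ∈ Y, congGen {p | c1 p.1 p.2 ∨ c2 p.1 p.2} ∈ Y)}) :
    ∀ r : L.L0 → L.L0 → Prop, IsSubbilocaleRep L r ↔ r ∈ X := by
  intro r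
  subst hX
  constructor
  · intro h
    rw [Set.mem_sInter]
    intro Y hY
    obtain ⟨hY1, hY2, hY3⟩ := hY
    obtain ⟨r1, r2, hr1, hr2, rfl⟩ := rep_to_form L r h
    have key : congGen (genSet1 L r1 ∪ genSet2 L r2)
        = congGen {p : L.L0 × L.L0 | imCong1 L r1 p.1 p.2 ∨ imCong2 L r2 p.1 p.2} := by
      apply congGen_eq_of
      · rintro p (hp | hp)
        · exact mem_congGen (Or.inl (mem_congGen hp))
        · exact mem_congGen (Or.inr (mem_congGen hp))
      · rintro p (hp | hp)
        · exact congGen_mono (fun q hq => mem_congGen (Or.inl hq)) p.1 p.2 hp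
        · exact congGen_mono (fun q hq => mem_congGen (Or.inr hq)) p.1 p.2 hp
    rw [key]
    exact hY3 _ (hY1 r1 hr1) _ (hY2 r2 hr2)
  · intro h
    refine (Set.mem_sInter.1 h) {s | IsSubbilocaleRep L s} ⟨?_, ?_, ?_⟩
    · intro r1 hr1
      have key : congGen (genSet1 L r1)
          = congGen (genSet1 L r1 ∪ genSet2 L (fun a b : L.L2 => a = b)) := by
        apply congGen_eq_of
        · intro p hp
          exact mem_congGen (Or.inl hp)
        · rintro p (hp | ⟨a, b, rfl, rfl⟩)
          · exact mem_congGen hp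
          · exact (isFrameCong_congGen _).1.refl _
      show IsSubbilocaleRep L (imCong1 L r1)
      rw [imCong1_eq, key]
      exact form_to_rep L r1 _ hr1 isFrameCong_eq
    · intro r2 hr2
      have key : congGen (genSet2 L r2)
          = congGen (genSet1 L (fun a b : L.L1 => a = b) ∪ genSet2 L r2) := by
        apply congGen_eq_of
        · intro p hp
          exact mem_congGen (Or.inr hp)
        · rintro p (⟨a, b, rfl, rfl⟩ | hp)
          · exact (isFrameCong_congGen _).1.refl _
          · exact mem_congGen hp
      show IsSubbilocaleRep L (imCong2 L r2)
      rw [imCong2_eq, key]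
      exact form_to_rep L _ r2 isFrameCong_eq hr2
    · intro c1 hc1m c2 hc2m
      obtain ⟨r11, r21, h11, h21, rfl⟩ := rep_to_form L c1 hc1m
      obtain ⟨r12, r22, h12, h22, rfl⟩ := rep_to_form L c2 hc2m
      set t1 : L.L1 → L.L1 → Prop :=
        congGen {p : L.L1 × L.L1 | r11 p.1 p.2 ∨ r12 p.1 p.2} with ht1
      set t2 : L.L2 → L.L2 → Prop :=
        congGen {p : L.L2 × L.L2 | r21 p.1 p.2 ∨ r22 p.1 p.2} with ht2
      have key : congGen {p : L.L0 × L.L0 |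
          congGen (genSet1 L r11 ∪ genSet2 L r21) p.1 p.2 ∨
          congGen (genSet1 L r12 ∪ genSet2 L r22) p.1 p.2}
          = congGen (genSet1 L t1 ∪ genSet2 L t2) := by
        apply congGen_eq_of
        · rintro p (hp | hp)
          · refine congGen_mono ?_ p.1 p.2 hp
            rintro q (⟨a, b, hab, rfl⟩ | ⟨a, b, hab, rfl⟩)
            · have hq : ((L.e1 a, L.e1 b) : L.L0 × L.L0) ∈ genSet1 L t1 ∪ genSet2 L t2 :=
                Or.inl ⟨a, b, show t1 a b from mem_congGen
                  (R := {p : L.L1 × L.L1 | r11 p.1 p.2 ∨ r12 p.1 p.2}) (p := (a, b))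
                  (Or.inl hab), rfl⟩
              exact mem_congGen hq
            · have hq : ((L.e2 a, L.e2 b) : L.L0 × L.L0) ∈ genSet1 L t1 ∪ genSet2 L t2 :=
                Or.inr ⟨a, b, show t2 a b from mem_congGen
                  (R := {p : L.L2 × L.L2 | r21 p.1 p.2 ∨ r22 p.1 p.2}) (p := (a, b))
                  (Or.inl hab), rfl⟩
              exact mem_congGen hq
          · refine congGen_mono ?_ p.1 p.2 hp
            rintro q (⟨a, b, hab, rfl⟩ | ⟨a, b, hab, rfl⟩)
            · have hq : ((L.e1 a, L.e1 b) : L.L0 × L.L0) ∈ genSet1 L t1 ∪ genSet2 L t2 :=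
                Or.inl ⟨a, b, show t1 a b from mem_congGen
                  (R := {p : L.L1 × L.L1 | r11 p.1 p.2 ∨ r12 p.1 p.2}) (p := (a, b))
                  (Or.inr hab), rfl⟩
              exact mem_congGen hq
            · have hq : ((L.e2 a, L.e2 b) : L.L0 × L.L0) ∈ genSet1 L t1 ∪ genSet2 L t2 :=
                Or.inr ⟨a, b, show t2 a b from mem_congGen
                  (R := {p : L.L2 × L.L2 | r21 p.1 p.2 ∨ r22 p.1 p.2}) (p := (a, b))
                  (Or.inr hab), rfl⟩
              exact mem_congGen hq
        · have hJ := isFrameCong_congGen {p : L.L0 × L.L0 |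
            congGen (genSet1 L r11 ∪ genSet2 L r21) p.1 p.2 ∨
            congGen (genSet1 L r12 ∪ genSet2 L r22) p.1 p.2}
          rintro q (⟨a, b, hab, rfl⟩ | ⟨a, b, hab, rfl⟩)
          · refine hab _ (isFrameCong_comap hJ L.e1) ?_
            rintro q' (hq' | hq')
            · have hm : ((L.e1 q'.1, L.e1 q'.2) : L.L0 × L.L0) ∈ {p : L.L0 × L.L0 |
                  congGen (genSet1 L r11 ∪ genSet2 L r21) p.1 p.2 ∨
                  congGen (genSet1 L r12 ∪ genSet2 L r22) p.1 p.2} := by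
                left
                exact mem_congGen (Or.inl ⟨q'.1, q'.2, hq', rfl⟩)
              exact mem_congGen hm
            · have hm : ((L.e1 q'.1, L.e1 q'.2) : L.L0 × L.L0) ∈ {p : L.L0 × L.L0 |
                  congGen (genSet1 L r11 ∪ genSet2 L r21) p.1 p.2 ∨
                  congGen (genSet1 L r12 ∪ genSet2 L r22) p.1 p.2} := by
                right
                exact mem_congGen (Or.inl ⟨q'.1, q'.2, hq', rfl⟩)
              exact mem_congGen hm
          · refine hab _ (isFrameCong_comap hJ L.e2) ?_
            rintro q' (hq' | hq')
            · have hm : ((L.e2 q'.1, L.e2 q'.2) : L.L0 × L.L0) ∈ {p : L.L0 × L.L0 |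
                  congGen (genSet1 L r11 ∪ genSet2 L r21) p.1 p.2 ∨
                  congGen (genSet1 L r12 ∪ genSet2 L r22) p.1 p.2} := by
                left
                exact mem_congGen (Or.inr ⟨q'.1, q'.2, hq', rfl⟩)
              exact mem_congGen hm
            · have hm : ((L.e2 q'.1, L.e2 q'.2) : L.L0 × L.L0) ∈ {p : L.L0 × L.L0 |
                  congGen (genSet1 L r11 ∪ genSet2 L r21) p.1 p.2 ∨
                  congGen (genSet1 L r12 ∪ genSet2 L r22) p.1 p.2} := by
                right
                exact mem_congGen (Or.inr ⟨q'.1, q'.2, hq', rfl⟩)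
              exact mem_congGen hm
      show IsSubbilocaleRep L _
      rw [key]
      exact form_to_rep L t1 t2 (isFrameCong_congGen _) (isFrameCong_congGen _)
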